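/- For n ≥ 1 and real numbers ρ₁, ρ₂ with 0 ≤ ρ₁ ≤ ρ₂, the vector of eigenvalues of the n×n exponential correlation matrix E_n(ρ₁) is majorized by the vector of eigenvalues of E_n(ρ₂). -/

import Mathlib

open Matrix

noncomputable section

/-- Sum of the `k` largest components of a finite real vector, expressed as the
supremum of sums over subsets of cardinality `k`. -/
def sumKLargest {ι : Type*} [Fintype ι] (a : ι → ℝ) (k : ℕ) : ℝ :=
  sSup {x : ℝ | ∃ s : Finset ι, s.card = k ∧ x = ∑ i ∈ s, a i}

/-- `a` is majorized by `b`: for every `k`, the sum of the `k` largest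
components of `a` is at most that of `b`, and the total sums are equal. -/
def MajorizedBy {ι ι' : Type*} [Fintype ι] [Fintype ι'] (a : ι → ℝ) (b : ι' → ℝ) : Prop :=
  (∀ k : ℕ, k ≤ Fintype.card ι → sumKLargest a k ≤ sumKLargest b k) ∧
    ∑ i, a i = ∑ i, b i

/-- The `n × n` exponential correlation matrix `E_n(ρ)`: the `(i,j)` entry is
`ρ^{|i−j|}`. -/
def expCorr (n : ℕ) (ρ : ℝ) : Matrix (Fin n) (Fin n) ℝ :=
  Matrix.of fun i j => ρ ^ ((i : ℤ) - (j : ℤ)).natAbs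

lemma expCorr_isHermitian (n : ℕ) (ρ : ℝ) : (expCorr n ρ).IsHermitian := by
  ext i j
  have h : ((j : ℤ) - (i : ℤ)).natAbs = ((i : ℤ) - (j : ℤ)).natAbs := by
    rw [← Int.natAbs_neg, neg_sub]
  simp [expCorr, Matrix.conjTranspose_apply, h]

/-! ### Auxiliary facts about `sumKLargest` -/

lemma sumKLargest_bddAbove {ι : Type*} [Fintype ι] (a : ι → ℝ) (k : ℕ) :
    BddAbove {x : ℝ | ∃ s : Finset ι, s.card = k ∧ x = ∑ i ∈ s, a i} := by
  apply Set.Finite.bddAbove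
  apply Set.Finite.subset (Set.finite_range (fun s : Finset ι => ∑ i ∈ s, a i))
  rintro x ⟨s, _, rfl⟩
  exact ⟨s, rfl⟩

lemma le_sumKLargest {ι : Type*} [Fintype ι] (a : ι → ℝ) {k : ℕ} {s : Finset ι}
    (hs : s.card = k) : ∑ i ∈ s, a i ≤ sumKLargest a k :=
  le_csSup (sumKLargest_bddAbove a k) ⟨s, hs, rfl⟩

lemma sumKLargest_le {ι : Type*} [Fintype ι] (a : ι → ℝ) {k : ℕ}
    (hk : k ≤ Fintype.card ι) {y : ℝ}
    (h : ∀ s : Finset ι, s.card = k → ∑ i ∈ s, a i ≤ y) : sumKLargest a k ≤ y := by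
  apply csSup_le
  · obtain ⟨s, -, hcard⟩ := Finset.exists_subset_card_eq (s := Finset.univ) (n := k)
      (by simpa [Finset.card_univ] using hk)
    exact ⟨_, s, hcard, rfl⟩
  · rintro x ⟨s, hs, rfl⟩
    exact h s hs

lemma exists_top_finset {ι : Type*} [Fintype ι] [DecidableEq ι] (a : ι → ℝ) :
    ∀ k : ℕ, k ≤ Fintype.card ι →
      ∃ s : Finset ι, s.card = k ∧ ∀ i ∈ s, ∀ j, j ∉ s → a j ≤ a i := by
  intro k
  induction k with
  | zero => exact fun _ => ⟨∅, rfl, by simp⟩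
  | succ k ih =>
    intro hk
    obtain ⟨s, hcard, hs⟩ := ih (Nat.le_of_succ_le hk)
    have hne : (sᶜ : Finset ι).Nonempty := by
      rw [← Finset.card_pos, Finset.card_compl, hcard]
      omega
    obtain ⟨j₀, hj₀, hmax⟩ := Finset.exists_max_image sᶜ a hne
    have hj₀s : j₀ ∉ s := Finset.mem_compl.mp hj₀
    refine ⟨insert j₀ s, ?_, ?_⟩
    · rw [Finset.card_insert_of_notMem hj₀s, hcard]
    · intro i hi j hj
      have hjs : j ∉ s := fun h => hj (Finset.mem_insert_of_mem h)
      rcases Finset.mem_insert.mp hi with rfl | hi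
      · exact hmax j (Finset.mem_compl.mpr hjs)
      · exact hs i hi j hjs

/-- If `0 ≤ d ≤ 1` componentwise and `∑ d = k`, then `∑ a i * d i` is at most the
sum of the `k` largest components of `a`. -/
lemma sum_mul_le_sumKLargest {ι : Type*} [Fintype ι] [DecidableEq ι] (a d : ι → ℝ) (k : ℕ)
    (hk : k ≤ Fintype.card ι)
    (hd0 : ∀ i, 0 ≤ d i) (hd1 : ∀ i, d i ≤ 1) (hdsum : ∑ i, d i = k) :
    ∑ i, a i * d i ≤ sumKLargest a k := by
  rcases Nat.eq_zero_or_pos k with rfl | hkpos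
  · have hz : ∀ i ∈ Finset.univ, d i = 0 := by
      rw [← Finset.sum_eq_zero_iff_of_nonneg (fun i _ => hd0 i)]
      simpa using hdsum
    have : ∑ i, a i * d i = 0 := Finset.sum_eq_zero fun i hi => by rw [hz i hi, mul_zero]
    rw [this]
    simpa using le_sumKLargest a (s := (∅ : Finset ι)) rfl
  · obtain ⟨s, hcard, hs⟩ := exists_top_finset a k hk
    have hsne : s.Nonempty := Finset.card_pos.mp (hcard ▸ hkpos)
    obtain ⟨i₀, hi₀, hmin⟩ := Finset.exists_min_image s a hsne
    set c := a i₀ with hc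
    have key : ∑ i, (a i - c) * d i ≤ ∑ i ∈ s, (a i - c) := by
      rw [← Finset.sum_add_sum_compl s]
      have h1 : ∑ i ∈ s, (a i - c) * d i ≤ ∑ i ∈ s, (a i - c) := by
        apply Finset.sum_le_sum
        intro i hi
        have : 0 ≤ a i - c := sub_nonneg.mpr (hmin i hi)
        calc (a i - c) * d i ≤ (a i - c) * 1 := mul_le_mul_of_nonneg_left (hd1 i) this
          _ = a i - c := mul_one _
      have h2 : ∑ i ∈ sᶜ, (a i - c) * d i ≤ 0 := by
        apply Finset.sum_nonpos
        intro j hj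
        have : a j - c ≤ 0 := sub_nonpos.mpr (hs i₀ hi₀ j (Finset.mem_compl.mp hj))
        exact mul_nonpos_of_nonpos_of_nonneg this (hd0 j)
      linarith
    have expand : ∑ i, a i * d i = ∑ i, (a i - c) * d i + c * (k : ℝ) := by
      rw [← hdsum, Finset.mul_sum, ← Finset.sum_add_distrib]
      exact Finset.sum_congr rfl fun i _ => by ring
    have sexp : ∑ i ∈ s, (a i - c) = ∑ i ∈ s, a i - c * k := by
      rw [Finset.sum_sub_distrib, Finset.sum_const, hcard]
      ring
    have hfin : ∑ i, a i * d i ≤ ∑ i ∈ s, a i := by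
      rw [expand]
      rw [sexp] at key
      linarith
    exact hfin.trans (le_sumKLargest a hcard)

/-! ### Matrix auxiliary lemmas -/

lemma psd_diag_nonneg {n : ℕ} {X : Matrix (Fin n) (Fin n) ℝ} (hX : X.PosSemidef) (i : Fin n) :
    0 ≤ X i i := hX.diag_nonneg

lemma trace_eq_sum_eigenvalues {n : ℕ} {A : Matrix (Fin n) (Fin n) ℝ} (hA : A.IsHermitian) :
    A.trace = ∑ i, hA.eigenvalues i := by
  conv_lhs => rw [hA.spectral_theorem]
  rw [Unitary.conjStarAlgAut_apply]
  rw [Matrix.trace_mul_cycle]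
  rw [Matrix.mem_unitaryGroup_iff'.mp (hA.eigenvectorUnitary).2, one_mul]
  simp [Matrix.trace_diagonal]

lemma trace_conj_swap {n : ℕ} (P A D : Matrix (Fin n) (Fin n) ℝ) :
    (P * (D * A * D)).trace = (D * P * D * A).trace := by
  rw [show P * (D * A * D) = (P * D * A) * D by noncomm_ring,
      Matrix.trace_mul_comm,
      show D * (P * D * A) = (D * P * D) * A by noncomm_ring]

lemma posSemidef_sum {n : ℕ} {N : ℕ} (f : Fin N → Matrix (Fin n) (Fin n) ℝ)
    (hf : ∀ m, (f m).PosSemidef) : (∑ m, f m).PosSemidef := by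
  classical
  exact Finset.sum_induction f _ (fun a b ha hb => ha.add hb) Matrix.PosSemidef.zero
    (fun m _ => hf m)

/-- **Key Ky-Fan type inequality.**  If `B = ∑ₘ Dₘ A Dₘ` for diagonal matrices `Dₘ`
whose squares sum to the identity, then for any subset `s` of cardinality `k`, the sum
of the eigenvalues of `B` over `s` is at most the sum of the `k` largest eigenvalues
of `A`. -/
lemma core_ineq {n N : ℕ} {A B : Matrix (Fin n) (Fin n) ℝ} (hA : A.IsHermitian)
    (hB : B.IsHermitian) (v : Fin n → Fin N → ℝ)
    (hunit : ∀ i, ∑ m, v i m * v i m = 1)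
    (hBA : B = ∑ m, Matrix.diagonal (fun i => v i m) * A * Matrix.diagonal (fun i => v i m))
    {k : ℕ} (hk : k ≤ n) {s : Finset (Fin n)} (hs : s.card = k) :
    ∑ i ∈ s, hB.eigenvalues i ≤ sumKLargest hA.eigenvalues k := by
  classical
  set U : Matrix (Fin n) (Fin n) ℝ := (hA.eigenvectorUnitary : Matrix (Fin n) (Fin n) ℝ) with hU
  set V : Matrix (Fin n) (Fin n) ℝ := (hB.eigenvectorUnitary : Matrix (Fin n) (Fin n) ℝ) with hV
  have hU1 : star U * U = 1 := Matrix.mem_unitaryGroup_iff'.mp (hA.eigenvectorUnitary).2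
  have hU2 : U * star U = 1 := Matrix.mem_unitaryGroup_iff.mp (hA.eigenvectorUnitary).2
  have hV1 : star V * V = 1 := Matrix.mem_unitaryGroup_iff'.mp (hB.eigenvectorUnitary).2
  have hV2 : V * star V = 1 := Matrix.mem_unitaryGroup_iff.mp (hB.eigenvectorUnitary).2
  have hAspec : A = U * Matrix.diagonal hA.eigenvalues * star U := by
    have := hA.spectral_theorem
    simpa using this
  have hBspec : B = V * Matrix.diagonal hB.eigenvalues * star V := by
    have := hB.spectral_theorem
    simpa using this
  set Q : Matrix (Fin n) (Fin n) ℝ :=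
    Matrix.diagonal (fun i => if i ∈ s then (1:ℝ) else 0) with hQ
  set P : Matrix (Fin n) (Fin n) ℝ := V * Q * star V with hP
  set D : Fin N → Matrix (Fin n) (Fin n) ℝ := fun m => Matrix.diagonal (fun i => v i m) with hD
  set X : Matrix (Fin n) (Fin n) ℝ := ∑ m, D m * P * D m with hX
  have hDsq : ∑ m, D m * D m = 1 := by
    ext i j
    simp only [Matrix.sum_apply, hD, Matrix.diagonal_mul_diagonal, Matrix.diagonal_apply,
      Matrix.one_apply]
    by_cases h : i = j
    · simp [h, hunit j]
    · simp [h]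
  have stepA : (P * B).trace = ∑ i ∈ s, hB.eigenvalues i := by
    conv_lhs => rw [hBspec, hP]
    rw [show V * Q * star V * (V * Matrix.diagonal hB.eigenvalues * star V)
        = V * (Q * (star V * V) * Matrix.diagonal hB.eigenvalues) * star V by noncomm_ring]
    rw [hV1, mul_one]
    rw [Matrix.trace_mul_cycle, ← mul_assoc, hV1, one_mul]
    rw [hQ, Matrix.diagonal_mul_diagonal, Matrix.trace_diagonal]
    rw [Finset.sum_congr rfl (fun i _ => ite_mul (i ∈ s) 1 0 (hB.eigenvalues i))]
    simp [Finset.sum_ite_mem]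
  have stepB : (P * B).trace = (X * A).trace := by
    rw [hBA, Matrix.mul_sum, Matrix.trace_sum, hX, Matrix.sum_mul, Matrix.trace_sum]
    exact Finset.sum_congr rfl fun m _ => trace_conj_swap P A (D m)
  have hDconj : ∀ m, (D m)ᴴ = D m := by
    intro m
    simp [hD, Matrix.diagonal_conjTranspose]
  have hQpsd : Q.PosSemidef := Matrix.PosSemidef.diagonal (by intro i; dsimp; split <;> norm_num)
  have hPpsd : P.PosSemidef := by
    have := hQpsd.mul_mul_conjTranspose_same V
    simpa [hP, Matrix.star_eq_conjTranspose] using this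
  have hXpsd : X.PosSemidef := by
    apply _root_.posSemidef_sum
    intro m
    have := hPpsd.mul_mul_conjTranspose_same (D m)
    rwa [hDconj m] at this
  have h1Qpsd : (1 - Q).PosSemidef := by
    have heq : (1 : Matrix (Fin n) (Fin n) ℝ) - Q
        = Matrix.diagonal (fun i => 1 - if i ∈ s then (1:ℝ) else 0) := by
      ext i j
      by_cases h : i = j <;> simp [hQ, Matrix.sub_apply, Matrix.diagonal_apply, Matrix.one_apply, h]
    rw [heq]
    exact Matrix.PosSemidef.diagonal (by intro i; dsimp; split <;> norm_num)
  have h1Ppsd : (1 - P).PosSemidef := by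
    have heq : 1 - P = V * (1 - Q) * star V := by
      rw [hP, mul_sub, sub_mul, mul_one]
      rw [hV2]
    rw [heq]
    have := h1Qpsd.mul_mul_conjTranspose_same V
    simpa [Matrix.star_eq_conjTranspose] using this
  have h1Xpsd : (1 - X).PosSemidef := by
    have heq : 1 - X = ∑ m, D m * (1 - P) * D m := by
      have : ∑ m, D m * (1 - P) * D m = (∑ m, D m * D m) - X := by
        rw [hX, ← Finset.sum_sub_distrib]
        exact Finset.sum_congr rfl fun m _ => by noncomm_ring
      rw [this, hDsq]
    rw [heq]
    apply _root_.posSemidef_sum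
    intro m
    have := h1Ppsd.mul_mul_conjTranspose_same (D m)
    rwa [hDconj m] at this
  have htrP : P.trace = (k : ℝ) := by
    rw [hP, Matrix.trace_mul_cycle, hV1, one_mul, hQ, Matrix.trace_diagonal]
    rw [Finset.sum_ite_mem]
    simp [hs]
  have htrX : X.trace = (k : ℝ) := by
    have : (P * (∑ m, D m * 1 * D m)).trace = (X * 1).trace := by
      rw [Matrix.mul_sum, Matrix.trace_sum, hX, Matrix.sum_mul, Matrix.trace_sum]
      exact Finset.sum_congr rfl fun m _ => trace_conj_swap P 1 (D m)
    simp only [mul_one] at this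
    rw [hDsq, mul_one] at this
    rw [← this, htrP]
  set d : Fin n → ℝ := fun i => (star U * X * U) i i with hd
  have hconjpsd : (star U * X * U).PosSemidef := by
    have := hXpsd.conjTranspose_mul_mul_same U
    simpa [Matrix.star_eq_conjTranspose] using this
  have hd0 : ∀ i, 0 ≤ d i := fun i => psd_diag_nonneg hconjpsd i
  have hd1 : ∀ i, d i ≤ 1 := by
    intro i
    have hpsd : (1 - star U * X * U).PosSemidef := by
      have heq : 1 - star U * X * U = star U * (1 - X) * U := by
        rw [mul_sub, sub_mul, mul_one, hU1]
      rw [heq]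
      have := h1Xpsd.conjTranspose_mul_mul_same U
      simpa [Matrix.star_eq_conjTranspose] using this
    have := psd_diag_nonneg hpsd i
    simp only [Matrix.sub_apply, Matrix.one_apply_eq] at this
    linarith [this]
  have hdsum : ∑ i, d i = (k : ℝ) := by
    have htr : (star U * X * U).trace = X.trace := by
      rw [Matrix.trace_mul_cycle, hU2, one_mul]
    calc ∑ i, d i = (star U * X * U).trace := by rw [Matrix.trace]; rfl
      _ = X.trace := htr
      _ = (k : ℝ) := htrX
  have stepG : (X * A).trace = ∑ i, hA.eigenvalues i * d i := by
    conv_lhs => rw [hAspec]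
    rw [show X * (U * Matrix.diagonal hA.eigenvalues * star U)
        = (X * U * Matrix.diagonal hA.eigenvalues) * star U by noncomm_ring,
      Matrix.trace_mul_comm,
      show star U * (X * U * Matrix.diagonal hA.eigenvalues)
        = (star U * X * U) * Matrix.diagonal hA.eigenvalues by noncomm_ring]
    rw [Matrix.trace]
    apply Finset.sum_congr rfl
    intro i _
    rw [Matrix.diag_apply, Matrix.mul_diagonal]
    exact mul_comm _ _
  calc ∑ i ∈ s, hB.eigenvalues i = (P * B).trace := stepA.symm
    _ = (X * A).trace := stepB
    _ = ∑ i, hA.eigenvalues i * d i := stepG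
    _ ≤ sumKLargest hA.eigenvalues k :=
        sum_mul_le_sumKLargest _ _ _ (by simpa using hk) hd0 hd1 hdsum

/-! ### Gram-vector representation of the exponential correlation matrix -/

def gv (n : ℕ) (t : ℝ) (i m : Fin n) : ℝ :=
  if (m:ℕ) = 0 then t^(i:ℕ)
  else if (m:ℕ) ≤ (i:ℕ) then t^((i:ℕ)-(m:ℕ)) * Real.sqrt (1 - t^2) else 0

lemma gram_aux {n : ℕ} (t : ℝ) (h0 : 0 ≤ t) (h1 : t ≤ 1) (i j : Fin n) (hj : (j:ℕ) ≤ (i:ℕ)) :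
    ∑ m : Fin n, gv n t i m * gv n t j m = t ^ ((i:ℕ) - (j:ℕ)) := by
  have hsq : (0:ℝ) ≤ 1 - t^2 := by nlinarith
  set I := (i:ℕ) with hI
  set J := (j:ℕ) with hJ
  set f : ℕ → ℝ := fun m =>
    (if m = 0 then t^I else if m ≤ I then t^(I-m) * Real.sqrt (1 - t^2) else 0) *
    (if m = 0 then t^J else if m ≤ J then t^(J-m) * Real.sqrt (1 - t^2) else 0) with hf
  have h1' : ∑ m : Fin n, gv n t i m * gv n t j m = ∑ m ∈ Finset.range n, f m := by
    rw [← Fin.sum_univ_eq_sum_range f n]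
    rfl
  have hJn : J + 1 ≤ n := j.isLt
  have h2' : ∑ m ∈ Finset.range n, f m = ∑ m ∈ Finset.range (J+1), f m := by
    symm
    apply Finset.sum_subset (Finset.range_subset_range.mpr hJn)
    intro m hm hnot
    have hmJ : J + 1 ≤ m := by
      rcases Nat.lt_or_ge m (J+1) with h | h
      · exact absurd (Finset.mem_range.mpr h) hnot
      · exact h
    have hm0 : m ≠ 0 := by omega
    have hmle : ¬ m ≤ J := by omega
    simp [hf, hm0, hmle]
  have h3' : ∑ m ∈ Finset.range (J+1), f m = (∑ m ∈ Finset.range J, f (m+1)) + f 0 :=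
    Finset.sum_range_succ' f J
  have hf0 : f 0 = t^I * t^J := by simp [hf]
  have hfm : ∀ m ∈ Finset.range J,
      f (m+1) = (1 - t^2) * (t^(I-J) * (t^2)^(J-1-m)) := by
    intro m hm
    have hmJ : m + 1 ≤ J := Finset.mem_range.mp hm
    have hmI : m + 1 ≤ I := hmJ.trans hj
    have e1 : I - (m+1) = (I - J) + (J - 1 - m) := by omega
    have e2 : J - (m+1) = J - 1 - m := by omega
    rw [hf]
    dsimp only
    rw [if_neg (Nat.succ_ne_zero m), if_pos hmI, if_neg (Nat.succ_ne_zero m), if_pos hmJ,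
      e1, e2, pow_add]
    have hss : Real.sqrt (1-t^2) * Real.sqrt (1-t^2) = 1 - t^2 := Real.mul_self_sqrt hsq
    have hp : (t^2)^(J-1-m) = t^(J-1-m) * t^(J-1-m) := by
      rw [← pow_mul, ← pow_add, two_mul]
    rw [hp]
    linear_combination (t^(I-J) * t^(J-1-m) * t^(J-1-m)) * hss
  have h4' : ∑ m ∈ Finset.range J, f (m+1)
      = (1 - t^2) * t^(I-J) * ∑ l ∈ Finset.range J, (t^2)^l := by
    rw [Finset.sum_congr rfl hfm,
      Finset.sum_range_reflect (fun l => (1-t^2) * (t^(I-J) * (t^2)^l)) J,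
      Finset.mul_sum]
    exact Finset.sum_congr rfl fun m _ => by ring
  have hgeom : (1 - t^2) * ∑ l ∈ Finset.range J, (t^2)^l = 1 - (t^2)^J := by
    linear_combination - geom_sum_mul (t^2) J
  have hIJ : t^I * t^J = t^(I-J) * (t^2)^J := by
    rw [← pow_add, ← pow_mul, ← pow_add]
    congr 1
    omega
  rw [h1', h2', h3', hf0, h4']
  linear_combination t^(I-J) * hgeom + hIJ

lemma gram_gv {n : ℕ} (t : ℝ) (h0 : 0 ≤ t) (h1 : t ≤ 1) (i j : Fin n) :
    ∑ m : Fin n, gv n t i m * gv n t j m = t ^ ((i:ℤ) - (j:ℤ)).natAbs := by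
  rcases le_total (j:ℕ) (i:ℕ) with h | h
  · have habs : ((i:ℤ) - (j:ℤ)).natAbs = (i:ℕ) - (j:ℕ) := by omega
    rw [habs]
    exact gram_aux t h0 h1 i j h
  · have habs : ((i:ℤ) - (j:ℤ)).natAbs = (j:ℕ) - (i:ℕ) := by omega
    rw [habs, ← gram_aux t h0 h1 j i h]
    exact Finset.sum_congr rfl fun m _ => mul_comm _ _

/-- **Eigenvalue majorization for exponential correlation matrices**:
for `0 ≤ ρ₁ ≤ ρ₂`, the eigenvalues of `E_n(ρ₁)` are majorized by those of
`E_n(ρ₂)`. -/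
theorem expCorr_eigenvalues_majorized
    (n : ℕ) (hn : 1 ≤ n) (ρ₁ ρ₂ : ℝ) (h0 : 0 ≤ ρ₁) (h12 : ρ₁ ≤ ρ₂) :
    MajorizedBy (expCorr_isHermitian n ρ₁).eigenvalues
      (expCorr_isHermitian n ρ₂).eigenvalues := by
  classical
  rcases eq_or_lt_of_le (h0.trans h12) with hz | hpos
  · have h1z : ρ₁ = 0 := le_antisymm (hz ▸ h12) h0
    subst h1z
    have h2z : ρ₂ = 0 := hz.symm
    subst h2z
    exact ⟨fun k _ => le_rfl, rfl⟩
  · set t := ρ₁ / ρ₂ with ht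
    have hρ₂ : ρ₂ ≠ 0 := ne_of_gt hpos
    have h0t : 0 ≤ t := div_nonneg h0 hpos.le
    have h1t : t ≤ 1 := by
      rw [ht, div_le_one hpos]
      exact h12
    have hmul : ρ₂ * t = ρ₁ := by
      rw [ht]
      field_simp
    set v : Fin n → Fin n → ℝ := fun i m => gv n t i m with hv
    have hunit : ∀ i : Fin n, ∑ m, v i m * v i m = 1 := by
      intro i
      show ∑ m, gv n t i m * gv n t i m = 1
      rw [gram_gv t h0t h1t i i]
      simp
    have hBA : expCorr n ρ₁ = ∑ m, Matrix.diagonal (fun i => v i m) * expCorr n ρ₂ *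
        Matrix.diagonal (fun i => v i m) := by
      ext i j
      rw [Matrix.sum_apply]
      have hterm : ∀ m, (Matrix.diagonal (fun i => v i m) * expCorr n ρ₂ *
          Matrix.diagonal (fun i => v i m)) i j = v i m * expCorr n ρ₂ i j * v j m := by
        intro m
        rw [Matrix.mul_diagonal, Matrix.diagonal_mul]
      rw [Finset.sum_congr rfl fun m _ => hterm m]
      have hfac : ∑ m, v i m * expCorr n ρ₂ i j * v j m
          = expCorr n ρ₂ i j * ∑ m, v i m * v j m := by
        rw [Finset.mul_sum]
        exact Finset.sum_congr rfl fun m _ => by ring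
      rw [hfac]
      show ρ₁ ^ ((i:ℤ) - (j:ℤ)).natAbs
        = ρ₂ ^ ((i:ℤ) - (j:ℤ)).natAbs * ∑ m, gv n t i m * gv n t j m
      rw [gram_gv t h0t h1t i j, ← mul_pow, hmul]
    constructor
    · intro k hk
      rw [Fintype.card_fin] at hk
      apply sumKLargest_le _ (by simpa using hk)
      intro s hs
      exact core_ineq (expCorr_isHermitian n ρ₂) (expCorr_isHermitian n ρ₁) v hunit hBA hk hs
    · rw [← trace_eq_sum_eigenvalues, ← trace_eq_sum_eigenvalues]
      have htr : ∀ ρ : ℝ, (expCorr n ρ).trace = (n : ℝ) := by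
        intro ρ
        rw [Matrix.trace]
        simp [expCorr, Matrix.diag]
      rw [htr, htr]

end
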